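/- Let ξ be an invariant random measure and ℚ a σ-finite measure on (Ω,ℱ) with ℚ(ξ(G)=0)=0 satisfying the Mecke equation: 𝔼_ℚ[∫ g(θ_s, −s) ξ(ds)] = 𝔼_ℚ[∫ g(θ_0, s) ξ(ds)] for all measurable g : Ω × G → [0,∞). Let h̃ : M × G → [0,∞) be measurable with ∫ h̃(μ,s) μ(ds) = 1 for every nonzero μ ∈ M. Then ℙ(A) := 𝔼_ℚ[∫ h̃(ξ ∘ θ_{−s}, s) 1_A(θ_{−s}) λ(ds)] defines a σ-finite stationary measure on (Ω,ℱ) whose Palm measure with respect to ξ equals ℚ. -/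

import Mathlib

open MeasureTheory Set
open scoped ENNReal NNReal

/-- Mecke's characterization, sufficiency: a σ-finite measure ℚ
satisfying the Mecke equation is the Palm measure of the explicitly constructed
stationary measure ℙ. -/
theorem stmt13
    {Ω : Type*} [MeasurableSpace Ω]
    {G : Type*} [AddCommGroup G] [TopologicalSpace G] [IsTopologicalAddGroup G]
    [LocallyCompactSpace G] [SecondCountableTopology G] [T2Space G]
    [MeasurableSpace G] [BorelSpace G]
    (lam : Measure G) [lam.IsAddHaarMeasure]
    (θ : G → Ω → Ω)
    (hθmeas : Measurable fun p : Ω × G => θ p.2 p.1)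
    (hθ0 : θ 0 = id)
    (hθadd : ∀ s t : G, θ s ∘ θ t = θ (s + t))
    (ξ : Ω → Measure G)
    (hξmeas : ∀ B : Set G, MeasurableSet B → Measurable fun ω => ξ ω B)
    (hξlocfin : ∀ ω, IsLocallyFiniteMeasure (ξ ω))
    (hξinv : ∀ (ω : Ω) (s : G) (B : Set G), MeasurableSet B →
      ξ (θ s ω) ((· + s) ⁻¹' B) = ξ ω B)
    (Q : Measure Ω) [SigmaFinite Q]
    (hQ0 : Q {ω | ξ ω Set.univ = 0} = 0)
    (hMecke : ∀ g : Ω → G → ℝ≥0∞, Measurable (fun p : Ω × G => g p.1 p.2) →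
      ∫⁻ ω, ∫⁻ s, g (θ s ω) (-s) ∂(ξ ω) ∂Q = ∫⁻ ω, ∫⁻ s, g ω s ∂(ξ ω) ∂Q)
    (htilde : Measure G → G → ℝ≥0∞)
    (htildemeas : Measurable fun p : Measure G × G => htilde p.1 p.2)
    (htilde1 : ∀ μ : Measure G, μ ≠ 0 → ∫⁻ s, htilde μ s ∂μ = 1)
    (P : Measure Ω)
    (hP : ∀ A : Set Ω, MeasurableSet A →
      P A = ∫⁻ ω, ∫⁻ s, htilde (ξ (θ (-s) ω)) s
        * Set.indicator A (fun _ => (1 : ℝ≥0∞)) (θ (-s) ω) ∂lam ∂Q) :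
    SigmaFinite P
    ∧ (∀ s : G, Measure.map (θ s) P = P)
    ∧ (∀ B : Set G, MeasurableSet B → 0 < lam B → lam B < ∞ →
        ∀ A : Set Ω, MeasurableSet A →
          Q A = (lam B)⁻¹ * ∫⁻ ω, ξ ω (B ∩ {s | θ s ω ∈ A}) ∂P) := by
  haveI : SigmaFinite lam := inferInstance
  have h2 : ∀ ω, SigmaFinite (ξ ω) := fun ω => by haveI := hξlocfin ω; infer_instance
  have h3 : ∀ ω, IsFiniteMeasureOnCompacts (ξ ω) := fun ω => by haveI := hξlocfin ω; infer_instance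
  have mξ : Measurable ξ := Measure.measurable_of_measurable_coe ξ hξmeas
  have hθc : ∀ s, Measurable (θ s) := fun s => hθmeas.comp (measurable_id.prodMk measurable_const)
  have hθθ : ∀ s t (ω : Ω), θ s (θ t ω) = θ (s + t) ω := fun s t ω => congrFun (hθadd s t) ω
  have hmapξ : ∀ (ω : Ω) (s : G), ξ (θ (-s) ω) = Measure.map (· + s) (ξ ω) := by
    intro ω s
    refine Measure.ext fun B hB => ?_
    rw [Measure.map_apply (measurable_add_const s) hB]
    have := hξinv (θ (-s) ω) s B hB
    rw [hθθ, add_neg_cancel, hθ0, id_eq] at this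
    exact this.symm
  have huniv : ∀ (ω : Ω) (s : G), ξ (θ (-s) ω) Set.univ = ξ ω Set.univ := by
    intro ω s
    rw [hmapξ, Measure.map_apply (measurable_add_const s) MeasurableSet.univ, preimage_univ]
  -- measurability of kernel lintegrals
  have main_meas : ∀ k : Ω → G → ℝ≥0∞, Measurable (fun p : Ω × G => k p.1 p.2) →
      Measurable fun ω => ∫⁻ s, k ω s ∂(ξ ω) := by
    intro k hk
    set D : ℕ → Set G := disjointed (compactCovering G) with hDdef
    have hDmeas : ∀ n, MeasurableSet (D n) :=
      MeasurableSet.disjointed fun n => (isCompact_compactCovering G n).isClosed.measurableSet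
    have hDdisj : Pairwise (Function.onFun Disjoint D) := disjoint_disjointed _
    have hDunion : ⋃ n, D n = univ := by
      rw [hDdef, iUnion_disjointed, iUnion_compactCovering]
    have hDfin : ∀ ω n, ξ ω (D n) < ∞ := by
      intro ω n
      haveI := hξlocfin ω
      exact lt_of_le_of_lt (measure_mono (disjointed_subset _ _))
        (isCompact_compactCovering G n).measure_lt_top
    set A : ℕ → ℕ → Set Ω :=
      fun n m => {ω | (m : ℝ≥0∞) ≤ ξ ω (D n) ∧ ξ ω (D n) < (m : ℝ≥0∞) + 1} with hAdef
    have hAmeas : ∀ n m, MeasurableSet (A n m) := by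
      intro n m
      have : A n m = (fun ω => ξ ω (D n)) ⁻¹' (Set.Ico (m : ℝ≥0∞) ((m : ℝ≥0∞) + 1)) := rfl
      rw [this]
      exact (hξmeas _ (hDmeas n)) measurableSet_Ico
    have hAmem : ∀ ω n m, ω ∈ A n m ↔ (m : ℝ≥0∞) ≤ ξ ω (D n) ∧ ξ ω (D n) < (m : ℝ≥0∞) + 1 :=
      fun ω n m => Iff.rfl
    have hAex : ∀ ω n, ∃! m, ω ∈ A n m := by
      intro ω n
      set r : ℝ≥0 := (ξ ω (D n)).toNNReal with hr
      have hcoe : (r : ℝ≥0∞) = ξ ω (D n) := ENNReal.coe_toNNReal (hDfin ω n).ne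
      refine ⟨⌊r⌋₊, ⟨?_, ?_⟩, ?_⟩
      · rw [← hcoe]
        exact_mod_cast Nat.floor_le zero_le
      · rw [← hcoe]
        exact_mod_cast Nat.lt_floor_add_one r
      · rintro m ⟨hm1, hm2⟩
        rw [← hcoe] at hm1 hm2
        have h1 : (m : ℝ≥0) ≤ r := by exact_mod_cast hm1
        have h2 : r < (m : ℝ≥0) + 1 := by exact_mod_cast hm2
        have hle : m ≤ ⌊r⌋₊ := Nat.le_floor h1
        have hlt : ⌊r⌋₊ < m + 1 := by
          rw [Nat.floor_lt zero_le]
          exact_mod_cast h2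
        omega
    -- the pieces of the kernel
    have hpiece_meas : ∀ n m, Measurable fun ω =>
        (if ω ∈ A n m then (ξ ω).restrict (D n) else 0 : Measure G) := by
      intro n m
      refine Measure.measurable_of_measurable_coe _ fun B hB => ?_
      simp only [apply_ite (fun μ : Measure G => μ B), Measure.restrict_apply hB,
        Measure.coe_zero, Pi.zero_apply]
      exact Measurable.ite (hAmeas n m) (hξmeas _ (hB.inter (hDmeas n))) measurable_const
    set κs : ℕ × ℕ → ProbabilityTheory.Kernel Ω G := fun p =>
      ⟨fun ω => if ω ∈ A p.1 p.2 then (ξ ω).restrict (D p.1) else 0, hpiece_meas p.1 p.2⟩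
      with hκsdef
    have hκs_fin : ∀ p, ProbabilityTheory.IsFiniteKernel (κs p) := by
      intro p
      refine ⟨⟨(p.2 : ℝ≥0∞) + 1, ENNReal.add_lt_top.2 ⟨ENNReal.natCast_lt_top _, ENNReal.one_lt_top⟩,
        fun ω => ?_⟩⟩
      show (if ω ∈ A p.1 p.2 then (ξ ω).restrict (D p.1) else 0 : Measure G) univ ≤ _
      split_ifs with h
      · rw [Measure.restrict_apply MeasurableSet.univ, univ_inter]
        exact h.2.le
      · simp
    set κ : ProbabilityTheory.Kernel Ω G := ProbabilityTheory.Kernel.sum κs with hκdef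
    haveI : ProbabilityTheory.IsSFiniteKernel κ :=
      ProbabilityTheory.Kernel.isSFiniteKernel_sum (hκs := fun p => by
        haveI := hκs_fin p; infer_instance)
    have hκeq : ∀ ω, κ ω = ξ ω := by
      intro ω
      refine Measure.ext fun B hB => ?_
      rw [hκdef, ProbabilityTheory.Kernel.sum_apply, Measure.sum_apply _ hB]
      have hterm : ∀ (n m : ℕ), (κs (n, m)) ω B
          = if ω ∈ A n m then (ξ ω).restrict (D n) B else 0 := by
        intro n m
        show (if ω ∈ A n m then (ξ ω).restrict (D n) else 0 : Measure G) B = _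
        split_ifs <;> simp
      calc ∑' p : ℕ × ℕ, (κs p) ω B = ∑' n : ℕ, ∑' m : ℕ, (κs (n, m)) ω B :=
            ENNReal.tsum_prod'
        _ = ∑' n : ℕ, (ξ ω).restrict (D n) B := by
            refine tsum_congr fun n => ?_
            obtain ⟨m₀, hm₀, hm₀u⟩ := hAex ω n
            rw [tsum_eq_single m₀ ?_]
            · rw [hterm, if_pos hm₀]
            · intro m hm
              rw [hterm, if_neg fun hc => hm (hm₀u m hc)]
        _ = (ξ ω) B := by
            rw [← Measure.sum_apply _ hB, ← Measure.restrict_iUnion hDdisj hDmeas,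
              hDunion, Measure.restrict_univ]
    have heq : (fun ω => ∫⁻ s, k ω s ∂(ξ ω)) = fun ω => ∫⁻ s, k ω s ∂(κ ω) := by
      funext ω; rw [hκeq ω]
    rw [heq]
    exact Measurable.lintegral_kernel_prod_right hk
  -- representation of P-lintegrals
  have hT : Measurable (fun p : Ω × G => θ (-p.2) p.1) :=
    hθmeas.comp (measurable_fst.prodMk measurable_snd.neg)
  have hF : Measurable (fun p : Ω × G => htilde (ξ (θ (-p.2) p.1)) p.2) :=
    htildemeas.comp ((mξ.comp hT).prodMk measurable_snd)
  have rep : ∀ f : Ω → ℝ≥0∞, Measurable f →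
      ∫⁻ ω, f ω ∂P
        = ∫⁻ ω, ∫⁻ s, htilde (ξ (θ (-s) ω)) s * f (θ (-s) ω) ∂lam ∂Q := by
    intro f hf
    have hPν : P = Measure.map (fun p : Ω × G => θ (-p.2) p.1)
        ((Q.prod lam).withDensity (fun p : Ω × G => htilde (ξ (θ (-p.2) p.1)) p.2)) := by
      refine Measure.ext fun A hA => ?_
      rw [hP A hA, Measure.map_apply hT hA, withDensity_apply _ (hT hA),
        ← lintegral_indicator (hT hA), lintegral_prod _ ((hF.indicator (hT hA)).aemeasurable)]
      refine lintegral_congr fun ω => lintegral_congr fun s => ?_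
      by_cases h : θ (-s) ω ∈ A
      · have h' : (ω, s) ∈ (fun p : Ω × G => θ (-p.2) p.1) ⁻¹' A := h
        rw [indicator_of_mem h, indicator_of_mem h', mul_one]
      · have h' : (ω, s) ∉ (fun p : Ω × G => θ (-p.2) p.1) ⁻¹' A := h
        rw [indicator_of_notMem h, indicator_of_notMem h', mul_zero]
    have hfT : Measurable fun p : Ω × G => f (θ (-p.2) p.1) := hf.comp hT
    rw [hPν, lintegral_map hf hT,
      lintegral_withDensity_eq_lintegral_mul _ hF hfT]
    simp only [Pi.mul_apply]
    rw [lintegral_prod (fun p : Ω × G => htilde (ξ (θ (-p.2) p.1)) p.2 * f (θ (-p.2) p.1))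
      ((hF.mul hfT).aemeasurable)]
  have hN : MeasurableSet {ω | ξ ω Set.univ = 0} :=
    (hξmeas univ MeasurableSet.univ) (measurableSet_singleton 0)
  have Qae : ∀ᵐ ω ∂Q, ξ ω Set.univ ≠ 0 := by
    rw [ae_iff]; simpa [not_not] using hQ0
  have hnull : P {ω | ξ ω Set.univ = 0} = 0 := by
    rw [hP _ hN]
    have h0 : ∀ᵐ ω ∂Q, (∫⁻ s, htilde (ξ (θ (-s) ω)) s *
        Set.indicator {ω | ξ ω Set.univ = 0} (fun _ => (1:ℝ≥0∞)) (θ (-s) ω) ∂lam) = 0 := by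
      filter_upwards [Qae] with ω hω
      have hz : ∀ s : G, Set.indicator {ω | ξ ω Set.univ = 0}
          (fun _ => (1:ℝ≥0∞)) (θ (-s) ω) = 0 := by
        intro s
        apply indicator_of_notMem
        simp only [mem_setOf_eq]
        rw [huniv ω s]; exact hω
      simp only [hz, mul_zero, lintegral_zero]
    rw [lintegral_congr_ae h0, lintegral_zero]
  have Pae : ∀ᵐ ω ∂P, ξ ω Set.univ ≠ 0 := by
    rw [ae_iff]; simpa [not_not] using hnull
  have hnorm : ∀ (ω : Ω), ξ ω Set.univ ≠ 0 → ∀ v : G,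
      ∫⁻ s, htilde (ξ (θ (-v) ω)) (v + s) ∂(ξ ω) = 1 := by
    intro ω hω v
    have hm : Measurable (htilde (ξ (θ (-v) ω))) :=
      htildemeas.comp (measurable_const.prodMk measurable_id)
    have h1 : ∫⁻ s, htilde (ξ (θ (-v) ω)) (v + s) ∂(ξ ω)
        = ∫⁻ s, htilde (ξ (θ (-v) ω)) (s + v) ∂(ξ ω) :=
      lintegral_congr fun s => by rw [add_comm]
    have h2 : ∫⁻ s, htilde (ξ (θ (-v) ω)) (s + v) ∂(ξ ω)
        = ∫⁻ t, htilde (ξ (θ (-v) ω)) t ∂(Measure.map (· + v) (ξ ω)) :=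
      (lintegral_map hm (measurable_add_const v)).symm
    rw [h1, h2, ← hmapξ ω v]
    refine htilde1 _ (Measure.measure_univ_ne_zero.mp ?_)
    rw [huniv ω v]; exact hω
  -- the key identity
  have star : ∀ g : Ω → G → ℝ≥0∞, Measurable (fun p : Ω × G => g p.1 p.2) →
      ∫⁻ ω, ∫⁻ s, g (θ s ω) s ∂(ξ ω) ∂P = ∫⁻ ω, ∫⁻ s, g ω s ∂lam ∂Q := by
    intro g gm
    have gmθ : Measurable (fun p : Ω × G => g (θ p.2 p.1) p.2) :=
      gm.comp (hθmeas.prodMk measurable_snd)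
    have hfmeas : Measurable fun ω => ∫⁻ s, g (θ s ω) s ∂(ξ ω) := main_meas _ gmθ
    rw [rep _ hfmeas]
    have step2 : ∀ (ω : Ω) (s : G),
        htilde (ξ (θ (-s) ω)) s * ∫⁻ t, g (θ t (θ (-s) ω)) t ∂(ξ (θ (-s) ω))
          = ∫⁻ u, htilde (ξ (θ (-s) ω)) s * g (θ u ω) (u + s) ∂(ξ ω) := by
      intro ω s
      have hφ : Measurable fun t => g (θ t (θ (-s) ω)) t :=
        gm.comp ((hθmeas.comp (measurable_const.prodMk measurable_id)).prodMk measurable_id)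
      have hφ' : Measurable fun u => g (θ (u + s) (θ (-s) ω)) (u + s) :=
        hφ.comp (measurable_add_const s)
      rw [hmapξ ω s, lintegral_map hφ (measurable_add_const s), ← lintegral_const_mul _ hφ']
      refine lintegral_congr fun u => ?_
      rw [hθθ, add_neg_cancel_right]
    have e1 : ∫⁻ ω, ∫⁻ s, htilde (ξ (θ (-s) ω)) s *
          (∫⁻ t, g (θ t (θ (-s) ω)) t ∂(ξ (θ (-s) ω))) ∂lam ∂Q
        = ∫⁻ ω, ∫⁻ s, ∫⁻ u, htilde (ξ (θ (-s) ω)) s * g (θ u ω) (u + s) ∂(ξ ω) ∂lam ∂Q :=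
      lintegral_congr fun ω => lintegral_congr fun s => step2 ω s
    have e2 : ∫⁻ ω, ∫⁻ s, ∫⁻ u, htilde (ξ (θ (-s) ω)) s * g (θ u ω) (u + s) ∂(ξ ω) ∂lam ∂Q
        = ∫⁻ ω, ∫⁻ u, ∫⁻ s, htilde (ξ (θ (-s) ω)) s * g (θ u ω) (u + s) ∂lam ∂(ξ ω) ∂Q := by
      refine lintegral_congr fun ω => ?_
      haveI := h2 ω
      refine lintegral_lintegral_swap ?_
      refine Measurable.aemeasurable ?_
      refine Measurable.mul ?_ ?_
      · exact hF.comp (measurable_const.prodMk measurable_fst)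
      · exact gm.comp ((hθmeas.comp (measurable_const.prodMk measurable_snd)).prodMk
          (measurable_snd.add measurable_fst))
    have e3 : ∫⁻ ω, ∫⁻ u, ∫⁻ s, htilde (ξ (θ (-s) ω)) s * g (θ u ω) (u + s) ∂lam ∂(ξ ω) ∂Q
        = ∫⁻ ω, ∫⁻ u, ∫⁻ v, htilde (ξ (θ (-v) (θ u ω))) (v + -u) * g (θ u ω) v ∂lam ∂(ξ ω) ∂Q := by
      refine lintegral_congr fun ω => lintegral_congr fun u => ?_
      have hH : Measurable fun s => htilde (ξ (θ (-s) ω)) s * g (θ u ω) (u + s) := by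
        refine Measurable.mul ?_ ?_
        · exact hF.comp (measurable_const.prodMk measurable_id)
        · exact (gm.comp (measurable_const.prodMk measurable_id)).comp
            (measurable_const.add measurable_id)
      rw [← (measurePreserving_add_right lam (-u)).lintegral_comp hH]
      refine lintegral_congr fun v => ?_
      have h1 : -(v + -u) = -v + u := by abel
      have h2' : u + (v + -u) = v := by abel
      rw [h1, h2', ← hθθ]
    have e4 : ∫⁻ ω, ∫⁻ u, ∫⁻ v, htilde (ξ (θ (-v) (θ u ω))) (v + -u) * g (θ u ω) v ∂lam ∂(ξ ω) ∂Q
        = ∫⁻ ω, ∫⁻ u, ∫⁻ v, htilde (ξ (θ (-v) ω)) (v + u) * g ω v ∂lam ∂(ξ ω) ∂Q := by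
      have hΦm : Measurable (fun p : Ω × G =>
          ∫⁻ v, htilde (ξ (θ (-v) p.1)) (v + p.2) * g p.1 v ∂lam) := by
        refine Measurable.lintegral_prod_right' (f := fun q : (Ω × G) × G =>
          htilde (ξ (θ (-q.2) q.1.1)) (q.2 + q.1.2) * g q.1.1 q.2) ?_
        refine Measurable.mul ?_ ?_
        · exact htildemeas.comp ((mξ.comp (hθmeas.comp
            ((measurable_fst.comp measurable_fst).prodMk measurable_snd.neg))).prodMk
            (measurable_snd.add (measurable_snd.comp measurable_fst)))
        · exact gm.comp ((measurable_fst.comp measurable_fst).prodMk measurable_snd)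
      have := hMecke (fun ω' t => ∫⁻ v, htilde (ξ (θ (-v) ω')) (v + t) * g ω' v ∂lam) hΦm
      simpa using this
    have e5 : ∫⁻ ω, ∫⁻ u, ∫⁻ v, htilde (ξ (θ (-v) ω)) (v + u) * g ω v ∂lam ∂(ξ ω) ∂Q
        = ∫⁻ ω, ∫⁻ v, ∫⁻ u, htilde (ξ (θ (-v) ω)) (v + u) * g ω v ∂(ξ ω) ∂lam ∂Q := by
      refine lintegral_congr fun ω => ?_
      haveI := h2 ω
      refine lintegral_lintegral_swap ?_
      refine Measurable.aemeasurable (Measurable.mul ?_ ?_)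
      · exact htildemeas.comp ((mξ.comp ((hθmeas.comp
          (measurable_const.prodMk measurable_snd.neg)))).prodMk
          (measurable_snd.add measurable_fst))
      · exact (gm.comp (measurable_const.prodMk measurable_id)).comp measurable_snd
    have e6 : ∫⁻ ω, ∫⁻ v, ∫⁻ u, htilde (ξ (θ (-v) ω)) (v + u) * g ω v ∂(ξ ω) ∂lam ∂Q
        = ∫⁻ ω, ∫⁻ v, g ω v ∂lam ∂Q := by
      refine lintegral_congr_ae ?_
      filter_upwards [Qae] with ω hω
      refine lintegral_congr fun v => ?_
      have hmm : Measurable fun u => htilde (ξ (θ (-v) ω)) (v + u) :=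
        (htildemeas.comp (measurable_const.prodMk measurable_id)).comp
          (measurable_const.add measurable_id)
      rw [lintegral_mul_const _ hmm, hnorm ω hω v, one_mul]
    rw [e1, e2, e3, e4, e5, e6]
  refine ⟨?_, ?_, ?_⟩
  · -- σ-finiteness of P
    obtain ⟨w, hwpos, hwmeas, hwint⟩ := exists_pos_lintegral_lt_of_sigmaFinite Q one_ne_zero
    have hCmeas : ∀ n, MeasurableSet (compactCovering G n) := fun n =>
      (isCompact_compactCovering G n).isClosed.measurableSet
    set f : ℕ → Ω → ℝ≥0∞ := fun n ω =>
      ∫⁻ s, Set.indicator (compactCovering G n) (fun _ => (1:ℝ≥0∞)) s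
        * (w (θ s ω) : ℝ≥0∞) ∂(ξ ω) with hfdef
    have hfm : ∀ n, Measurable (f n) := by
      intro n
      refine main_meas (fun ω s => Set.indicator (compactCovering G n) (fun _ => (1:ℝ≥0∞)) s
        * (w (θ s ω) : ℝ≥0∞)) ?_
      exact ((measurable_const.indicator (hCmeas n)).comp measurable_snd).mul
        (hwmeas.coe_nnreal_ennreal.comp hθmeas)
    have hint : ∀ n, ∫⁻ ω, f n ω ∂P < ∞ := by
      intro n
      have hgm : Measurable (fun p : Ω × G =>
          Set.indicator (compactCovering G n) (fun _ => (1:ℝ≥0∞)) p.2 * (w p.1 : ℝ≥0∞)) :=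
        ((measurable_const.indicator (hCmeas n)).comp measurable_snd).mul
          (hwmeas.coe_nnreal_ennreal.comp measurable_fst)
      have hs := star (fun ω s => Set.indicator (compactCovering G n) (fun _ => (1:ℝ≥0∞)) s
        * (w ω : ℝ≥0∞)) hgm
      rw [hfdef]
      rw [hs]
      have hc : ∀ ω : Ω, ∫⁻ s, Set.indicator (compactCovering G n) (fun _ => (1:ℝ≥0∞)) s
          * (w ω : ℝ≥0∞) ∂lam = lam (compactCovering G n) * (w ω : ℝ≥0∞) := by
        intro ω
        rw [lintegral_mul_const _ (measurable_const.indicator (hCmeas n)),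
          lintegral_indicator_const (hCmeas n), one_mul, mul_comm]
      simp only [hc]
      rw [lintegral_const_mul _ hwmeas.coe_nnreal_ennreal]
      exact ENNReal.mul_lt_top (isCompact_compactCovering G n).measure_lt_top
        (hwint.trans ENNReal.one_lt_top)
    have hpos : ∀ ω, ξ ω Set.univ ≠ 0 → ∃ n, f n ω ≠ 0 := by
      intro ω hω
      have hn : ∃ n, ξ ω (compactCovering G n) ≠ 0 := by
        by_contra hcon
        push_neg at hcon
        have : ξ ω (⋃ n, compactCovering G n) = 0 := measure_iUnion_null hcon
        rw [iUnion_compactCovering] at this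
        exact hω this
      obtain ⟨n, hn⟩ := hn
      refine ⟨n, fun hzero => ?_⟩
      have hk : Measurable fun s => Set.indicator (compactCovering G n)
          (fun _ => (1:ℝ≥0∞)) s * (w (θ s ω) : ℝ≥0∞) :=
        (measurable_const.indicator (hCmeas n)).mul
          (hwmeas.coe_nnreal_ennreal.comp (hθmeas.comp
            (measurable_const.prodMk measurable_id)))
      rw [hfdef] at hzero
      simp only at hzero
      rw [lintegral_eq_zero_iff hk] at hzero
      have hsub : compactCovering G n ⊆ {s : G | ¬ (Set.indicator (compactCovering G n)
          (fun _ => (1:ℝ≥0∞)) s * (w (θ s ω) : ℝ≥0∞) = 0)} := by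
        intro s hsmem
        simp only [mem_setOf_eq, indicator_of_mem hsmem, one_mul]
        exact fun hcc => (hwpos (θ s ω)).ne' (by exact_mod_cast hcc)
      have hz0 : ∀ᵐ s ∂(ξ ω), Set.indicator (compactCovering G n)
          (fun _ => (1:ℝ≥0∞)) s * (w (θ s ω) : ℝ≥0∞) = 0 := hzero
      rw [ae_iff] at hz0
      exact hn (measure_mono_null hsub hz0)
    refine ⟨⟨⟨fun i => {ω | ξ ω Set.univ = 0} ∪
        {ω | ((i.unpair.2 : ℝ≥0∞) + 1)⁻¹ ≤ f i.unpair.1 ω}, fun _ => trivial, ?_, ?_⟩⟩⟩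
    · intro i
      refine lt_of_le_of_lt (measure_union_le _ _) ?_
      rw [hnull, zero_add]
      refine lt_of_le_of_lt (meas_ge_le_lintegral_div (hfm i.unpair.1).aemeasurable
        (ENNReal.inv_ne_zero.2 (by simp)) (ENNReal.inv_ne_top.2 (by simp))) ?_
      rw [div_eq_mul_inv, inv_inv]
      exact ENNReal.mul_lt_top (hint i.unpair.1) (by simp)
    · refine eq_univ_of_forall fun ω => ?_
      by_cases hω : ξ ω Set.univ = 0
      · exact mem_iUnion.2 ⟨0, Or.inl hω⟩
      · obtain ⟨n, hfn⟩ := hpos ω hω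
        obtain ⟨m, hm⟩ := ENNReal.exists_inv_nat_lt hfn
        refine mem_iUnion.2 ⟨Nat.pair n m, Or.inr ?_⟩
        simp only [mem_setOf_eq, Nat.unpair_pair]
        refine le_trans ?_ hm.le
        gcongr
        exact le_self_add
  · -- stationarity
    intro t
    refine Measure.ext fun A hA => ?_
    rw [Measure.map_apply (hθc t) hA]
    have hg2 : Measurable (fun p : Ω × G => htilde (ξ (θ (-(p.2 + t)) p.1)) (p.2 + t) *
        Set.indicator A (fun _ => (1:ℝ≥0∞)) (θ (-p.2) p.1)) :=
      (hF.comp (measurable_fst.prodMk (measurable_snd.add_const t))).mul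
        ((measurable_const.indicator hA).comp hT)
    have hsub : ∀ ω : Ω, ∫⁻ s, htilde (ξ (θ (-s) ω)) s *
        Set.indicator (θ t ⁻¹' A) (fun _ => (1:ℝ≥0∞)) (θ (-s) ω) ∂lam
        = ∫⁻ u, htilde (ξ (θ (-(u + t)) ω)) (u + t) *
            Set.indicator A (fun _ => (1:ℝ≥0∞)) (θ (-u) ω) ∂lam := by
      intro ω
      have hH : Measurable fun s => htilde (ξ (θ (-s) ω)) s *
          Set.indicator (θ t ⁻¹' A) (fun _ => (1:ℝ≥0∞)) (θ (-s) ω) :=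
        (hF.comp (measurable_const.prodMk measurable_id)).mul
          ((measurable_const.indicator ((hθc t) hA)).comp
            (hT.comp (measurable_const.prodMk measurable_id)))
      rw [← (measurePreserving_add_right lam t).lintegral_comp hH]
      refine lintegral_congr fun u => ?_
      congr 1
      by_cases h : θ (-u) ω ∈ A
      · rw [indicator_of_mem h, indicator_of_mem]
        show θ t (θ (-(u + t)) ω) ∈ A
        rw [hθθ, (show t + -(u + t) = -u by abel)]
        exact h
      · rw [indicator_of_notMem h, indicator_of_notMem]
        show θ t (θ (-(u + t)) ω) ∉ A
        rw [hθθ, (show t + -(u + t) = -u by abel)]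
        exact h
    calc P (θ t ⁻¹' A)
        = ∫⁻ ω, ∫⁻ u, htilde (ξ (θ (-(u + t)) ω)) (u + t) *
            Set.indicator A (fun _ => (1:ℝ≥0∞)) (θ (-u) ω) ∂lam ∂Q := by
          rw [hP _ ((hθc t) hA)]; exact lintegral_congr fun ω => hsub ω
      _ = ∫⁻ ω, ∫⁻ u, htilde (ξ (θ (-(u + t)) (θ u ω))) (u + t) *
            Set.indicator A (fun _ => (1:ℝ≥0∞)) (θ (-u) (θ u ω)) ∂(ξ ω) ∂P :=
          (star (fun ω u => htilde (ξ (θ (-(u + t)) ω)) (u + t) *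
            Set.indicator A (fun _ => (1:ℝ≥0∞)) (θ (-u) ω)) hg2).symm
      _ = ∫⁻ ω, Set.indicator A (fun _ => (1:ℝ≥0∞)) ω ∂P := by
          refine lintegral_congr_ae ?_
          filter_upwards [Pae] with ω hω
          have heq : ∀ u : G, htilde (ξ (θ (-(u + t)) (θ u ω))) (u + t) *
              Set.indicator A (fun _ => (1:ℝ≥0∞)) (θ (-u) (θ u ω))
              = htilde (ξ (θ (-t) ω)) (t + u) *
                Set.indicator A (fun _ => (1:ℝ≥0∞)) ω := by
            intro u
            rw [hθθ, hθθ, (show -(u + t) + u = -t by abel), (show -u + u = 0 by abel),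
              hθ0, id_eq, add_comm u t]
          simp only [heq]
          have hmm' : Measurable fun u => htilde (ξ (θ (-t) ω)) (t + u) :=
            (htildemeas.comp (measurable_const.prodMk measurable_id)).comp
              (measurable_const.add measurable_id)
          rw [lintegral_mul_const _ hmm', hnorm ω hω t, one_mul]
      _ = P A := by rw [lintegral_indicator_const hA, one_mul]
  · -- Palm property
    intro B hB hB0 hBtop A hA
    have hg3 : Measurable (fun p : Ω × G =>
        Set.indicator A (fun _ => (1:ℝ≥0∞)) p.1 * Set.indicator B (fun _ => (1:ℝ≥0∞)) p.2) :=
      ((measurable_const.indicator hA).comp measurable_fst).mul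
        ((measurable_const.indicator hB).comp measurable_snd)
    have hstar := star (fun ω s => Set.indicator A (fun _ => (1:ℝ≥0∞)) ω *
        Set.indicator B (fun _ => (1:ℝ≥0∞)) s) hg3
    have hL : ∫⁻ ω, ∫⁻ s, Set.indicator A (fun _ => (1:ℝ≥0∞)) (θ s ω) *
          Set.indicator B (fun _ => (1:ℝ≥0∞)) s ∂(ξ ω) ∂P
        = ∫⁻ ω, ξ ω (B ∩ {s | θ s ω ∈ A}) ∂P := by
      refine lintegral_congr fun ω => ?_
      have hpre : MeasurableSet {s : G | θ s ω ∈ A} :=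
        (hθmeas.comp (measurable_const.prodMk measurable_id)) hA
      have hind : ∀ s : G, Set.indicator A (fun _ => (1:ℝ≥0∞)) (θ s ω) *
          Set.indicator B (fun _ => (1:ℝ≥0∞)) s
          = Set.indicator (B ∩ {s : G | θ s ω ∈ A}) (fun _ => (1:ℝ≥0∞)) s := by
        intro s
        by_cases h1 : θ s ω ∈ A <;> by_cases h2 : s ∈ B <;>
          simp [indicator_of_mem, indicator_of_notMem, h1, h2, mem_inter_iff, mem_setOf_eq]
      simp only [hind]
      rw [lintegral_indicator_const (hB.inter hpre), one_mul]
    have hR : ∫⁻ ω, ∫⁻ s, Set.indicator A (fun _ => (1:ℝ≥0∞)) ω *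
          Set.indicator B (fun _ => (1:ℝ≥0∞)) s ∂lam ∂Q = lam B * Q A := by
      have hc : ∀ ω : Ω, ∫⁻ s, Set.indicator A (fun _ => (1:ℝ≥0∞)) ω *
          Set.indicator B (fun _ => (1:ℝ≥0∞)) s ∂lam
          = Set.indicator A (fun _ => (1:ℝ≥0∞)) ω * lam B := by
        intro ω
        rw [lintegral_const_mul _ (measurable_const.indicator hB),
          lintegral_indicator_const hB, one_mul]
      simp only [hc]
      rw [lintegral_mul_const _ (measurable_const.indicator hA),
        lintegral_indicator_const hA, one_mul, mul_comm]
    rw [hL, hR] at hstar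
    rw [hstar, ← mul_assoc, ENNReal.inv_mul_cancel hB0.ne' hBtop.ne, one_mul]
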